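/- A partially ordered set (Λ, ≤) is interval-finite (every closed interval [μ,λ] is finite) and good if and only if every finitely generated lower set (ideal) Γ ⊆ Λ admits a descending chain of finitely generated subideals Γ = Γ_0 ⊇ Γ_1 ⊇ Γ_2 ⊇ … such that Γ_k \ Γ_{k+1} is finite for every k ≥ 0 and the intersection of all Γ_k is empty. -/

import Mathlib

/-- A poset is interval-finite if every closed interval is finite. -/
def IntervalFinite (Λ : Type*) [PartialOrder Λ] : Prop :=
  ∀ a b : Λ, (Set.Icc a b).Finite

/-- A poset is good if every non-minimal element has at least one but only finitely
many predecessors (covers from below), and whenever `μ < λ` there is a predecessor `λ'`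
of `λ` with `μ ≤ λ'`. -/
def GoodPoset (Λ : Type*) [PartialOrder Λ] : Prop :=
  (∀ l : Λ, ¬ IsMin l → (∃ m, m ⋖ l) ∧ {m : Λ | m ⋖ l}.Finite) ∧
  (∀ m l : Λ, m < l → ∃ l' : Λ, l' ⋖ l ∧ m ≤ l')

/-- A finitely generated ideal of a poset: a finite union of principal ideals. -/
def IsFGIdeal {Λ : Type*} [PartialOrder Λ] (Γ : Set Λ) : Prop :=
  ∃ s : Finset Λ, Γ = ⋃ l ∈ s, Set.Iic l

/-- Auxiliary: the difference `G 0 \ G k` is covered by the successive differences. -/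
lemma aux_diff_union {Λ : Type*} (G : ℕ → Set Λ) (k : ℕ) :
    G 0 \ G k ⊆ ⋃ i ∈ Finset.range k, G i \ G (i + 1) := by
  induction k with
  | zero => simp
  | succ k ih =>
    intro x hx
    by_cases hxk : x ∈ G k
    · exact Set.mem_biUnion (Finset.self_mem_range_succ k) ⟨hxk, hx.2⟩
    · have hmem := ih ⟨hx.1, hxk⟩
      have hsub : (⋃ i ∈ Finset.range k, G i \ G (i + 1)) ⊆
          ⋃ i ∈ Finset.range (k + 1), G i \ G (i + 1) := by
        apply Set.biUnion_subset_biUnion_left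
        exact Finset.coe_subset.2 (Finset.range_subset_range.2 (Nat.le_succ k))
      exact hsub hmem

theorem intervalFinite_good_iff_chains (Λ : Type*) [PartialOrder Λ] :
    (IntervalFinite Λ ∧ GoodPoset Λ) ↔
      ∀ Γ : Set Λ, IsFGIdeal Γ →
        ∃ G : ℕ → Set Λ, G 0 = Γ ∧ (∀ k, IsFGIdeal (G k)) ∧
          (∀ k, G (k + 1) ⊆ G k) ∧ (∀ k, (G k \ G (k + 1)).Finite) ∧
          (⋂ k, G k) = ∅ := by
  classical
  constructor
  · rintro ⟨hIF, hGood⟩ Γ ⟨s0, hΓ⟩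
    have covFin : ∀ l : Λ, {m | m ⋖ l}.Finite := by
      intro l
      by_cases hl : IsMin l
      · have : {m | m ⋖ l} = ∅ := by
          ext m; simp only [Set.mem_setOf_eq, Set.mem_empty_iff_false, iff_false]
          exact fun h => (not_isMin_of_lt h.lt) hl
        rw [this]; exact Set.finite_empty
      · exact (hGood.1 l hl).2
    -- generator sets
    set s : ℕ → Finset Λ :=
      fun k => Nat.rec s0 (fun _ t => t.biUnion (fun l => (covFin l).toFinset)) k with hs
    have hs0 : s 0 = s0 := rfl
    have hs_succ : ∀ k, s (k + 1) = (s k).biUnion (fun l => (covFin l).toFinset) :=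
      fun k => rfl
    set G : ℕ → Set Λ := fun k => ⋃ l ∈ s k, Set.Iic l with hG
    have hmemG : ∀ k x, x ∈ G k ↔ ∃ l ∈ s k, x ≤ l := by
      intro k x; simp [hG, Set.mem_iUnion]
    refine ⟨G, ?_, fun k => ⟨s k, rfl⟩, ?_, ?_, ?_⟩
    · rw [hΓ]; rfl
    · intro k x hx
      obtain ⟨m, hm, hxm⟩ := (hmemG (k + 1) x).1 hx
      rw [hs_succ, Finset.mem_biUnion] at hm
      obtain ⟨l, hl, hml⟩ := hm
      rw [Set.Finite.mem_toFinset] at hml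
      exact (hmemG k x).2 ⟨l, hl, hxm.trans hml.le⟩
    · intro k
      apply (s k).finite_toSet.subset
      rintro x ⟨hx, hx'⟩
      obtain ⟨l, hl, hxl⟩ := (hmemG k x).1 hx
      rcases hxl.lt_or_eq with hlt | rfl
      · exfalso
        obtain ⟨l', hl', hxl'⟩ := hGood.2 x l hlt
        apply hx'
        refine (hmemG (k + 1) x).2 ⟨l', ?_, hxl'⟩
        rw [hs_succ, Finset.mem_biUnion]
        exact ⟨l, hl, (Set.Finite.mem_toFinset _).2 hl'⟩
      · exact hl
    · -- empty intersection
      rw [Set.eq_empty_iff_forall_notMem]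
      intro x hx
      rw [Set.mem_iInter] at hx
      -- chains
      have chain : ∀ k, ∀ y, y ∈ G k →
          ∃ c : ℕ → Λ, y ≤ c 0 ∧ (∀ i < k, c i < c (i + 1)) ∧ c k ∈ s0 := by
        intro k
        induction k with
        | zero =>
          intro y hy
          obtain ⟨l, hl, hyl⟩ := (hmemG 0 y).1 hy
          exact ⟨fun _ => l, hyl, fun i hi => absurd hi (by omega), hl⟩
        | succ k ih =>
          intro y hy
          obtain ⟨m, hm, hym⟩ := (hmemG (k + 1) y).1 hy
          rw [hs_succ, Finset.mem_biUnion] at hm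
          obtain ⟨l, hl, hml⟩ := hm
          rw [Set.Finite.mem_toFinset] at hml
          obtain ⟨c, hc0, hcs, hck⟩ := ih l ((hmemG k l).2 ⟨l, hl, le_refl l⟩)
          refine ⟨fun i => match i with | 0 => m | j + 1 => c j, hym, ?_, hck⟩
          intro i hi
          match i with
          | 0 => exact lt_of_lt_of_le hml.lt hc0
          | j + 1 => exact hcs j (by omega)
      -- strict monotonicity of chains
      have mono : ∀ (c : ℕ → Λ) (k : ℕ), (∀ i < k, c i < c (i + 1)) →
          ∀ j ≤ k, ∀ i < j, c i < c j := by
        intro c k hc j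
        induction j with
        | zero => intro _ i hi; omega
        | succ j ih =>
          intro hjk i hi
          rcases Nat.lt_succ_iff_lt_or_eq.1 hi with hij | rfl
          · exact (ih (by omega) i hij).trans (hc j (by omega))
          · exact hc i (by omega)
      have hU : (⋃ l ∈ s0, Set.Icc x l).Finite :=
        Set.Finite.biUnion s0.finite_toSet (fun l _ => hIF x l)
      have key : ∀ k, k + 1 ≤ hU.toFinset.card := by
        intro k
        obtain ⟨c, hc0, hcs, hck⟩ := chain k x (hx k)
        have hle : ∀ i ≤ k, x ≤ c i ∧ c i ≤ c k := by
          intro i hi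
          constructor
          · rcases Nat.eq_zero_or_pos i with rfl | hpos
            · exact hc0
            · exact hc0.trans (mono c k hcs i hi 0 hpos).le
          · rcases Nat.lt_or_ge i k with h | h
            · exact (mono c k hcs k le_rfl i h).le
            · have : i = k := by omega
              rw [this]
        have hmem : ∀ i ∈ Finset.range (k + 1), c i ∈ hU.toFinset := by
          intro i hi
          rw [Finset.mem_range] at hi
          rw [Set.Finite.mem_toFinset]
          exact Set.mem_biUnion hck ⟨(hle i (by omega)).1, (hle i (by omega)).2⟩
        have hinj : Set.InjOn c ↑(Finset.range (k + 1)) := by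
          intro i hi j hj hij
          simp only [Finset.coe_range, Set.mem_Iio] at hi hj
          by_contra hne
          rcases Nat.lt_or_ge i j with h | h
          · exact absurd hij (mono c k hcs j (by omega) i h).ne
          · have : j < i := by omega
            exact absurd hij.symm (mono c k hcs i (by omega) j this).ne
        calc k + 1 = (Finset.range (k + 1)).card := (Finset.card_range _).symm
          _ ≤ hU.toFinset.card := Finset.card_le_card_of_injOn c hmem hinj
      exact absurd (key hU.toFinset.card) (by omega)
  · intro h
    have hIF : IntervalFinite Λ := by
      intro a b
      by_cases hab : a ≤ b
      · obtain ⟨G, hG0, hFG, _, hdiff, hint⟩ := h (Set.Iic b) ⟨{b}, by simp⟩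
        have hlow : ∀ k, ∀ x y : Λ, x ≤ y → y ∈ G k → x ∈ G k := by
          intro k x y hxy hy
          obtain ⟨t, ht⟩ := hFG k
          rw [ht] at hy ⊢
          simp only [Set.mem_iUnion, Set.mem_Iic, exists_prop] at hy ⊢
          obtain ⟨l, hl, hyl⟩ := hy
          exact ⟨l, hl, hxy.trans hyl⟩
        obtain ⟨k, hk⟩ : ∃ k, a ∉ G k := by
          by_contra hc
          push_neg at hc
          have : a ∈ ⋂ k, G k := Set.mem_iInter.2 hc
          rw [hint] at this
          exact this
        have hsubset : Set.Icc a b ⊆ ⋃ i ∈ Finset.range k, G i \ G (i + 1) := by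
          intro x hx
          refine aux_diff_union G k ⟨?_, ?_⟩
          · rw [hG0]; exact hx.2
          · exact fun hxk => hk (hlow k a x hx.1 hxk)
        exact (Set.Finite.biUnion (Finset.range k).finite_toSet
          (fun i _ => hdiff i)).subset hsubset
      · rw [Set.Icc_eq_empty hab]; exact Set.finite_empty
    have part2 : ∀ m l : Λ, m < l → ∃ l' : Λ, l' ⋖ l ∧ m ≤ l' := by
      intro m l hml
      have hS : {x | m ≤ x ∧ x < l}.Finite :=
        (hIF m l).subset (fun x hx => ⟨hx.1, hx.2.le⟩)
      obtain ⟨l', hl'S, hmax⟩ := Set.Finite.exists_maximalFor id _ hS ⟨m, le_refl m, hml⟩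
      refine ⟨l', ⟨hl'S.2, fun c hc1 hc2 => ?_⟩, hl'S.1⟩
      exact hc1.ne (le_antisymm hc1.le (hmax ⟨hl'S.1.trans hc1.le, hc2⟩ hc1.le))
    refine ⟨hIF, ?_, part2⟩
    intro l hl
    obtain ⟨m, hml⟩ := not_isMin_iff.1 hl
    obtain ⟨l', hl', _⟩ := part2 m l hml
    refine ⟨⟨l', hl'⟩, ?_⟩
    obtain ⟨G, hG0, hFG, hsub, hdiff, hint⟩ := h (Set.Iic l) ⟨{l}, by simp⟩
    have hsub' : ∀ j, G j ⊆ G 0 := by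
      intro j
      induction j with
      | zero => exact subset_rfl
      | succ j ih => exact (hsub j).trans ih
    obtain ⟨k, hk⟩ : ∃ k, l ∉ G k := by
      by_contra hc
      push_neg at hc
      have : l ∈ ⋂ k, G k := Set.mem_iInter.2 hc
      rw [hint] at this
      exact this
    obtain ⟨t, ht⟩ := hFG k
    have hcov : {m | m ⋖ l} ⊆ (⋃ i ∈ Finset.range k, G i \ G (i + 1)) ∪ ↑t := by
      intro m hm
      by_cases hmk : m ∈ G k
      · right
        rw [ht] at hmk
        simp only [Set.mem_iUnion, Set.mem_Iic, exists_prop] at hmk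
        obtain ⟨g, hg, hmg⟩ := hmk
        have hgk : g ∈ G k := by
          rw [ht]
          exact Set.mem_biUnion hg (le_refl g)
        have hgl : g ≤ l := by
          have := hsub' k hgk
          rw [hG0] at this
          exact this
        have hgl' : g < l := lt_of_le_of_ne hgl (by rintro rfl; exact hk hgk)
        rcases hmg.lt_or_eq with hlt | rfl
        · exact absurd hgl' (hm.2 hlt)
        · exact hg
      · left
        refine aux_diff_union G k ⟨?_, hmk⟩
        rw [hG0]
        exact hm.lt.le
    exact ((Set.Finite.biUnion (Finset.range k).finite_toSet
      (fun i _ => hdiff i)).union t.finite_toSet).subset hcov
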